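/- arXiv:1610.03025 — 2 statements merged into one kernel-verified Lean document; each statement's English description precedes it below -/
import Mathlib

section
/- Suppose (U^n) and (V^n) both solve the explicit upwind scheme (with the same f⁺, f⁻, δ) and the CFL condition holds with bounds L⁺, L⁻. Assume that for every n ∈ ℕ the sequence j ↦ |U^n_j − V^n_j| is summable over ℤ. Then the scheme is ℓ¹ contracting: for every n ∈ ℕ, Σ_{j∈ℤ} |U^n_j − V^n_j| ≤ Σ_{j∈ℤ} |U^0_j − V^0_j|. -/
open scoped BigOperators

/-- The L1 coefficients `c^{n+1}_k` for the discrete Caputo derivative: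
`c^{n+1}_0 = (n+1)^{1-α} - n^{1-α}` and, for `1 ≤ k ≤ n`,
`c^{n+1}_k = 2(n+1-k)^{1-α} - (n+2-k)^{1-α} - (n-k)^{1-α}`. -/
noncomputable def caputoCoeff (α : ℝ) (n k : ℕ) : ℝ :=
  if k = 0 then ((n : ℝ) + 1) ^ (1 - α) - (n : ℝ) ^ (1 - α)
  else 2 * ((n : ℝ) + 1 - (k : ℝ)) ^ (1 - α) - ((n : ℝ) + 2 - (k : ℝ)) ^ (1 - α)
    - ((n : ℝ) - (k : ℝ)) ^ (1 - α)

/-- `U` solves the explicit upwind scheme with time steps indexed by `ℕ`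
and space indexed by `ℤ`. -/
def SolvesExplicitScheme (α δ : ℝ) (fp fm : ℝ → ℝ) (U : ℕ → ℤ → ℝ) : Prop :=
  ∀ (n : ℕ) (j : ℤ),
    U (n + 1) j = (∑ k ∈ Finset.range (n + 1), caputoCoeff α n k * U k j)
      - δ * (fp (U n j) - fp (U n (j - 1)))
      - δ * (fm (U n (j + 1)) - fm (U n j))

/-- The CFL condition with bounds `Lp, Lm`:
`(f⁺)' ≤ Lp`, `(f⁻)' ≥ -Lm` and `δ (Lp + Lm) ≤ 2 - 2^{1-α}`. -/
def CFLCondition (α δ Lp Lm : ℝ) (fp fm : ℝ → ℝ) : Prop :=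
  0 ≤ Lp ∧ 0 ≤ Lm ∧ (∀ x, deriv fp x ≤ Lp) ∧ (∀ x, -Lm ≤ deriv fm x) ∧
    δ * (Lp + Lm) ≤ 2 - (2 : ℝ) ^ (1 - α)

lemma caputoCoeff_nonneg {α : ℝ} (hα : α ∈ Set.Ioo (0:ℝ) 1) (n k : ℕ) (hk : k ≤ n) :
    0 ≤ caputoCoeff α n k := by
  have hp0 : (0:ℝ) ≤ 1 - α := by linarith [hα.2]
  have hp1 : (1:ℝ) - α ≤ 1 := by linarith [hα.1]
  unfold caputoCoeff
  split_ifs with h0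
  · have := Real.rpow_le_rpow (n.cast_nonneg) (by linarith : (n:ℝ) ≤ (n:ℝ)+1) hp0
    linarith
  · have hkn : (k:ℝ) ≤ (n:ℝ) := by exact_mod_cast hk
    have hk1 : (1:ℝ) ≤ (k:ℝ) := by exact_mod_cast Nat.one_le_iff_ne_zero.mpr h0
    have hcc := Real.concaveOn_rpow hp0 hp1
    have h1 : ((n:ℝ) - k) ∈ Set.Ici (0:ℝ) := by simp; linarith
    have h2 : ((n:ℝ) + 2 - k) ∈ Set.Ici (0:ℝ) := by simp [Set.mem_Ici]; linarith
    have hmid := hcc.2 h1 h2 (by norm_num : (0:ℝ) ≤ 1/2) (by norm_num : (0:ℝ) ≤ 1/2)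
      (by norm_num : (1/2 : ℝ) + 1/2 = 1)
    have heq : (1/2 : ℝ) • ((n:ℝ) - k) + (1/2:ℝ) • ((n:ℝ) + 2 - k) = (n:ℝ) + 1 - k := by
      simp [smul_eq_mul]; ring
    rw [heq] at hmid
    simp only [smul_eq_mul] at hmid
    linarith

lemma caputoCoeff_sum {α : ℝ} (hα : α ∈ Set.Ioo (0:ℝ) 1) (n : ℕ) :
    ∑ k ∈ Finset.range (n+1), caputoCoeff α n k = 1 := by
  have hpne : (1:ℝ) - α ≠ 0 := sub_ne_zero.mpr (ne_of_gt hα.2)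
  set D : ℕ → ℝ := fun k => ((n:ℝ) + 1 - k) ^ (1-α) - ((n:ℝ) - k) ^ (1-α) with hD
  have hstep : ∀ k ∈ Finset.range n, caputoCoeff α n (k+1) = D (k+1) - D k := by
    intro k hk
    unfold caputoCoeff
    rw [if_neg (Nat.succ_ne_zero k)]
    simp only [hD]
    push_cast
    rw [show (n:ℝ) + 1 - ((k:ℝ)+1) = (n:ℝ) - (k:ℝ) from by ring,
      show (n:ℝ) + 2 - ((k:ℝ)+1) = (n:ℝ) + 1 - (k:ℝ) from by ring]
    ring
  rw [Finset.sum_range_succ']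
  rw [Finset.sum_congr rfl hstep, Finset.sum_range_sub D]
  have hD0 : D 0 = caputoCoeff α n 0 := by simp [hD, caputoCoeff]
  have hDn : D n = 1 := by
    simp only [hD]
    rw [show (n:ℝ) + 1 - (n:ℝ) = 1 from by ring, sub_self, Real.one_rpow,
      Real.zero_rpow hpne, sub_zero]
  rw [hD0, hDn]; ring

lemma two_sub_le_caputoCoeff_self {α : ℝ} (hα : α ∈ Set.Ioo (0:ℝ) 1) (n : ℕ) :
    2 - (2:ℝ) ^ (1-α) ≤ caputoCoeff α n n := by
  have hp0 : (0:ℝ) ≤ 1 - α := by linarith [hα.2]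
  have hpne : (1:ℝ) - α ≠ 0 := sub_ne_zero.mpr (ne_of_gt hα.2)
  unfold caputoCoeff
  rcases Nat.eq_zero_or_pos n with rfl | hn
  · rw [if_pos rfl, Nat.cast_zero, zero_add, Real.one_rpow, Real.zero_rpow hpne, sub_zero]
    have : (1:ℝ) ≤ (2:ℝ)^(1-α) := Real.one_le_rpow one_le_two hp0
    linarith
  · rw [if_neg (Nat.pos_iff_ne_zero.mp hn)]
    rw [show (n:ℝ) + 1 - (n:ℝ) = 1 from by ring, show (n:ℝ) + 2 - (n:ℝ) = 2 from by ring,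
      sub_self, Real.one_rpow, Real.zero_rpow hpne]
    linarith

lemma mvt_bound (f : ℝ → ℝ) (hf : Differentiable ℝ f) (lo hi : ℝ)
    (h1 : ∀ x, lo ≤ deriv f x) (h2 : ∀ x, deriv f x ≤ hi) (u v : ℝ) :
    ∃ e, lo ≤ e ∧ e ≤ hi ∧ f u - f v = e * (u - v) := by
  rcases lt_trichotomy u v with hlt | heq | hgt
  · obtain ⟨c, _, hc⟩ := exists_deriv_eq_slope f hlt hf.continuous.continuousOn
      hf.differentiableOn
    refine ⟨deriv f c, h1 c, h2 c, ?_⟩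
    rw [hc]
    have hne : v - u ≠ 0 := sub_ne_zero.mpr hlt.ne'
    field_simp
    ring
  · exact ⟨deriv f u, h1 u, h2 u, by rw [heq]; ring⟩
  · obtain ⟨c, _, hc⟩ := exists_deriv_eq_slope f hgt hf.continuous.continuousOn
      hf.differentiableOn
    refine ⟨deriv f c, h1 c, h2 c, ?_⟩
    rw [hc]
    have hne : u - v ≠ 0 := sub_ne_zero.mpr hgt.ne'
    field_simp

/-- the explicit upwind scheme is `ℓ¹` contracting under the CFL
condition: `Σ_j |U^n_j - V^n_j| ≤ Σ_j |U^0_j - V^0_j|` for every `n`. -/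
theorem explicit_upwind_l1_contracting (α τ h : ℝ) (hα : α ∈ Set.Ioo (0 : ℝ) 1)
    (hτ : 0 < τ) (hh : 0 < h) (δ : ℝ) (hδ : δ = τ ^ α / (h * Real.Gamma (2 - α)))
    (fp fm : ℝ → ℝ) (hfp : Differentiable ℝ fp) (hfm : Differentiable ℝ fm)
    (hfp' : ∀ x, 0 ≤ deriv fp x) (hfm' : ∀ x, deriv fm x ≤ 0)
    (U V : ℕ → ℤ → ℝ)
    (hU : SolvesExplicitScheme α δ fp fm U) (hV : SolvesExplicitScheme α δ fp fm V)
    (Lp Lm : ℝ) (hcfl : CFLCondition α δ Lp Lm fp fm)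
    (hsum : ∀ n : ℕ, Summable (fun j : ℤ => |U n j - V n j|)) :
    ∀ n : ℕ, ∑' j : ℤ, |U n j - V n j| ≤ ∑' j : ℤ, |U 0 j - V 0 j| := by
  obtain ⟨hα0, hα1⟩ := hα
  obtain ⟨hLp, hLm, hfpL, hfmL, hCFL⟩ := hcfl
  have hδ0 : 0 ≤ δ := by
    have hg : 0 < Real.Gamma (2 - α) := Real.Gamma_pos_of_pos (by linarith)
    rw [hδ]
    exact div_nonneg (Real.rpow_pos_of_pos hτ α).le (mul_nonneg hh.le hg.le)
  have key : ∀ n : ℕ, ∑' j : ℤ, |U (n+1) j - V (n+1) j| ≤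
      ∑ k ∈ Finset.range (n+1), caputoCoeff α n k * ∑' j : ℤ, |U k j - V k j| := by
    intro n
    obtain ⟨a, ha⟩ : ∃ a : ℤ → ℝ, ∀ j, 0 ≤ a j ∧ a j ≤ Lp ∧
        fp (U n j) - fp (V n j) = a j * (U n j - V n j) := by
      choose a h1 h2 h3 using fun j : ℤ => mvt_bound fp hfp 0 Lp hfp' hfpL (U n j) (V n j)
      exact ⟨a, fun j => ⟨h1 j, h2 j, h3 j⟩⟩
    obtain ⟨b, hb⟩ : ∃ b : ℤ → ℝ, ∀ j, -Lm ≤ b j ∧ b j ≤ 0 ∧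
        fm (U n j) - fm (V n j) = b j * (U n j - V n j) := by
      choose b h1 h2 h3 using fun j : ℤ => mvt_bound fm hfm (-Lm) 0 hfmL hfm' (U n j) (V n j)
      exact ⟨b, fun j => ⟨h1 j, h2 j, h3 j⟩⟩
    have hcnn : δ * Lp + δ * Lm ≤ caputoCoeff α n n := by
      have h1 := two_sub_le_caputoCoeff_self ⟨hα0, hα1⟩ n
      have h2 : δ * (Lp + Lm) = δ * Lp + δ * Lm := mul_add δ Lp Lm
      linarith
    have hc2 : ∀ j : ℤ, 0 ≤ caputoCoeff α n n - δ * a j + δ * b j := by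
      intro j
      have h1 : δ * a j ≤ δ * Lp := mul_le_mul_of_nonneg_left (ha j).2.1 hδ0
      have h2 : -(δ * Lm) ≤ δ * b j := by
        have := mul_le_mul_of_nonneg_left (hb j).1 hδ0
        linarith
      linarith
    have hc2' : ∀ j : ℤ, caputoCoeff α n n - δ * a j + δ * b j ≤ caputoCoeff α n n := by
      intro j
      have h1 : 0 ≤ δ * a j := mul_nonneg hδ0 (ha j).1
      have h2 : δ * b j ≤ 0 := mul_nonpos_of_nonneg_of_nonpos hδ0 (hb j).2.1
      linarith
    have hc3 : ∀ j : ℤ, 0 ≤ δ * a j := fun j => mul_nonneg hδ0 (ha j).1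
    have hc4 : ∀ j : ℤ, 0 ≤ δ * (-(b j)) := fun j => mul_nonneg hδ0 (by linarith [(hb j).2.1])
    -- pointwise identity
    have hw : ∀ j : ℤ, U (n+1) j - V (n+1) j =
        (∑ k ∈ Finset.range n, caputoCoeff α n k * (U k j - V k j))
        + (caputoCoeff α n n - δ * a j + δ * b j) * (U n j - V n j)
        + (δ * a (j-1)) * (U n (j-1) - V n (j-1))
        + (δ * (-(b (j+1)))) * (U n (j+1) - V n (j+1)) := by
      intro j
      have e1 := (ha j).2.2
      have e2 := (ha (j-1)).2.2
      have e3 := (hb (j+1)).2.2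
      have e4 := (hb j).2.2
      have hsum_eq : ∑ k ∈ Finset.range (n+1), caputoCoeff α n k * U k j
          - ∑ k ∈ Finset.range (n+1), caputoCoeff α n k * V k j
          = (∑ k ∈ Finset.range n, caputoCoeff α n k * (U k j - V k j))
            + caputoCoeff α n n * (U n j - V n j) := by
        rw [← Finset.sum_sub_distrib, Finset.sum_range_succ]
        congr 1
        exact Finset.sum_congr rfl fun k _ => (mul_sub _ _ _).symm
        exact (mul_sub _ _ _).symm
      rw [hU n j, hV n j]
      linear_combination hsum_eq - δ * e1 + δ * e2 - δ * e3 + δ * e4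
    -- pointwise abs bound
    have habs : ∀ j : ℤ, |U (n+1) j - V (n+1) j| ≤
        (∑ k ∈ Finset.range n, caputoCoeff α n k * |U k j - V k j|)
        + (caputoCoeff α n n - δ * a j + δ * b j) * |U n j - V n j|
        + (δ * a (j-1)) * |U n (j-1) - V n (j-1)|
        + (δ * (-(b (j+1)))) * |U n (j+1) - V n (j+1)| := by
      intro j
      rw [hw j]
      have t : ∀ x1 x2 x3 x4 : ℝ, |x1 + x2 + x3 + x4| ≤ |x1| + |x2| + |x3| + |x4| := by
        intro x1 x2 x3 x4
        have a1 := abs_add_le (x1+x2+x3) x4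
        have a2 := abs_add_le (x1+x2) x3
        have a3 := abs_add_le x1 x2
        linarith
      refine (t _ _ _ _).trans ?_
      have b1 : |∑ k ∈ Finset.range n, caputoCoeff α n k * (U k j - V k j)| ≤
          ∑ k ∈ Finset.range n, caputoCoeff α n k * |U k j - V k j| := by
        refine (Finset.abs_sum_le_sum_abs _ _).trans (le_of_eq ?_)
        refine Finset.sum_congr rfl fun k hk => ?_
        rw [abs_mul, abs_of_nonneg (caputoCoeff_nonneg ⟨hα0, hα1⟩ n k
          (Finset.mem_range.mp hk).le)]
      rw [abs_mul (caputoCoeff α n n - δ * a j + δ * b j), abs_of_nonneg (hc2 j),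
        abs_mul (δ * a (j-1)), abs_of_nonneg (hc3 (j-1)),
        abs_mul (δ * (-(b (j+1)))), abs_of_nonneg (hc4 (j+1))]
      linarith
    -- summability
    have hshift1 : Summable (fun j : ℤ => |U n (j-1) - V n (j-1)|) := by
      have := (Equiv.subRight (1:ℤ)).summable_iff.mpr (hsum n)
      simpa [Function.comp_def] using this
    have hshift2 : Summable (fun j : ℤ => |U n (j+1) - V n (j+1)|) := by
      have := (Equiv.addRight (1:ℤ)).summable_iff.mpr (hsum n)
      simpa [Function.comp_def] using this
    have hS1 : ∀ k : ℕ, Summable (fun j : ℤ => caputoCoeff α n k * |U k j - V k j|) :=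
      fun k => (hsum k).mul_left _
    have hSsum : Summable (fun j : ℤ =>
        ∑ k ∈ Finset.range n, caputoCoeff α n k * |U k j - V k j|) :=
      summable_sum fun k _ => hS1 k
    have hS2 : Summable (fun j : ℤ =>
        (caputoCoeff α n n - δ * a j + δ * b j) * |U n j - V n j|) := by
      refine Summable.of_nonneg_of_le (fun j => mul_nonneg (hc2 j) (abs_nonneg _))
        (fun j => ?_) ((hsum n).mul_left (caputoCoeff α n n))
      exact mul_le_mul_of_nonneg_right (hc2' j) (abs_nonneg _)
    have hS3 : Summable (fun j : ℤ => (δ * a (j-1)) * |U n (j-1) - V n (j-1)|) := by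
      refine Summable.of_nonneg_of_le (fun j => mul_nonneg (hc3 (j-1)) (abs_nonneg _))
        (fun j => ?_) (hshift1.mul_left (δ * Lp))
      exact mul_le_mul_of_nonneg_right
        (mul_le_mul_of_nonneg_left (ha (j-1)).2.1 hδ0) (abs_nonneg _)
    have hS4 : Summable (fun j : ℤ => (δ * (-(b (j+1)))) * |U n (j+1) - V n (j+1)|) := by
      refine Summable.of_nonneg_of_le (fun j => mul_nonneg (hc4 (j+1)) (abs_nonneg _))
        (fun j => ?_) (hshift2.mul_left (δ * Lm))
      refine mul_le_mul_of_nonneg_right (mul_le_mul_of_nonneg_left ?_ hδ0) (abs_nonneg _)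
      linarith [(hb (j+1)).1]
    have hS3' : Summable (fun j : ℤ => (δ * a j) * |U n j - V n j|) := by
      refine Summable.of_nonneg_of_le (fun j => mul_nonneg (hc3 j) (abs_nonneg _))
        (fun j => ?_) ((hsum n).mul_left (δ * Lp))
      exact mul_le_mul_of_nonneg_right
        (mul_le_mul_of_nonneg_left (ha j).2.1 hδ0) (abs_nonneg _)
    have hS4' : Summable (fun j : ℤ => (δ * (-(b j))) * |U n j - V n j|) := by
      refine Summable.of_nonneg_of_le (fun j => mul_nonneg (hc4 j) (abs_nonneg _))
        (fun j => ?_) ((hsum n).mul_left (δ * Lm))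
      refine mul_le_mul_of_nonneg_right (mul_le_mul_of_nonneg_left ?_ hδ0) (abs_nonneg _)
      linarith [(hb j).1]
    -- shift equalities
    have e1 : (∑' j : ℤ, (δ * a (j-1)) * |U n (j-1) - V n (j-1)|)
        = ∑' j : ℤ, (δ * a j) * |U n j - V n j| := by
      have := (Equiv.subRight (1:ℤ)).tsum_eq (fun j : ℤ => (δ * a j) * |U n j - V n j|)
      simpa using this
    have e2 : (∑' j : ℤ, (δ * (-(b (j+1)))) * |U n (j+1) - V n (j+1)|)
        = ∑' j : ℤ, (δ * (-(b j))) * |U n j - V n j| := by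
      have := (Equiv.addRight (1:ℤ)).tsum_eq (fun j : ℤ => (δ * (-(b j))) * |U n j - V n j|)
      simpa using this
    calc ∑' j : ℤ, |U (n+1) j - V (n+1) j|
        ≤ ∑' j : ℤ, ((∑ k ∈ Finset.range n, caputoCoeff α n k * |U k j - V k j|)
          + (caputoCoeff α n n - δ * a j + δ * b j) * |U n j - V n j|
          + (δ * a (j-1)) * |U n (j-1) - V n (j-1)|
          + (δ * (-(b (j+1)))) * |U n (j+1) - V n (j+1)|) :=
          Summable.tsum_le_tsum habs (hsum (n+1)) (((hSsum.add hS2).add hS3).add hS4)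
      _ = (∑' j : ℤ, ∑ k ∈ Finset.range n, caputoCoeff α n k * |U k j - V k j|)
          + (∑' j : ℤ, (caputoCoeff α n n - δ * a j + δ * b j) * |U n j - V n j|)
          + (∑' j : ℤ, (δ * a (j-1)) * |U n (j-1) - V n (j-1)|)
          + (∑' j : ℤ, (δ * (-(b (j+1)))) * |U n (j+1) - V n (j+1)|) := by
          rw [Summable.tsum_add ((hSsum.add hS2).add hS3) hS4, Summable.tsum_add (hSsum.add hS2) hS3,
            Summable.tsum_add hSsum hS2]
      _ = (∑ k ∈ Finset.range n, caputoCoeff α n k * ∑' j : ℤ, |U k j - V k j|)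
          + ((∑' j : ℤ, (caputoCoeff α n n - δ * a j + δ * b j) * |U n j - V n j|)
          + (∑' j : ℤ, (δ * a j) * |U n j - V n j|)
          + (∑' j : ℤ, (δ * (-(b j))) * |U n j - V n j|)) := by
          rw [Summable.tsum_finsetSum fun k _ => hS1 k, e1, e2]
          simp only [tsum_mul_left]
          ring
      _ = (∑ k ∈ Finset.range n, caputoCoeff α n k * ∑' j : ℤ, |U k j - V k j|)
          + caputoCoeff α n n * ∑' j : ℤ, |U n j - V n j| := by
          congr 1
          rw [← Summable.tsum_add hS2 hS3', ← Summable.tsum_add (hS2.add hS3') hS4', ← tsum_mul_left]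
          exact tsum_congr fun j => by ring
      _ = ∑ k ∈ Finset.range (n+1), caputoCoeff α n k * ∑' j : ℤ, |U k j - V k j| :=
          (Finset.sum_range_succ _ n).symm
  -- strong induction
  intro n
  induction n using Nat.strong_induction_on with
  | _ n ih =>
    match n with
    | 0 => exact le_rfl
    | Nat.succ m =>
      calc ∑' j : ℤ, |U (m+1) j - V (m+1) j|
          ≤ ∑ k ∈ Finset.range (m+1), caputoCoeff α m k * ∑' j : ℤ, |U k j - V k j| :=
            key m
        _ ≤ ∑ k ∈ Finset.range (m+1), caputoCoeff α m k * ∑' j : ℤ, |U 0 j - V 0 j| := by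
            refine Finset.sum_le_sum fun k hk => ?_
            exact mul_le_mul_of_nonneg_left (ih k (Finset.mem_range.mp hk))
              (caputoCoeff_nonneg ⟨hα0, hα1⟩ m k (Nat.lt_succ_iff.mp (Finset.mem_range.mp hk)))
        _ = ∑' j : ℤ, |U 0 j - V 0 j| := by
            rw [← Finset.sum_mul, caputoCoeff_sum ⟨hα0, hα1⟩ m, one_mul]
end

section
/- Suppose (U^n) solves the implicit upwind scheme for linear advection with λ > 0, and assume that for every n ∈ ℕ the sequence j ↦ (U^n_j)² is summable over ℤ. Then for every n ≥ 1 the energy estimate holds: Σ_{j∈ℤ} (U^n_j)² + Σ_{k=0}^{n−1} c^{n}_k Σ_{j∈ℤ} (U^n_j − U^k_j)² + λ Σ_{j∈ℤ} (U^n_j − U^n_{j−1})² ≤ Σ_{j∈ℤ} (U^0_j)²; in particular ‖U^n‖_{ℓ²} ≤ ‖U^0‖_{ℓ²} for all n ∈ ℕ. -/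
open scoped BigOperators

/-- `U` solves the implicit upwind scheme for the linear advection equation
with flux `f(u) = a u`, `a > 0`, where `lam = a τ^α / (h Γ(2-α))`. -/
def SolvesImplicitAdvection (α lam : ℝ) (U : ℕ → ℤ → ℝ) : Prop :=
  ∀ (n : ℕ) (j : ℤ),
    U (n + 1) j = (∑ k ∈ Finset.range (n + 1), caputoCoeff α n k * U k j)
      - lam * (U (n + 1) j - U (n + 1) (j - 1))

/-- `dcoef β m = (m+1)^β - m^β`. -/
noncomputable def dcoef (β : ℝ) (m : ℕ) : ℝ := ((m : ℝ) + 1) ^ β - (m : ℝ) ^ β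

lemma dcoef_nonneg {β : ℝ} (hβ : 0 ≤ β) (m : ℕ) : 0 ≤ dcoef β m :=
  sub_nonneg.mpr (Real.rpow_le_rpow (Nat.cast_nonneg m) (by linarith) hβ)

lemma dcoef_succ_le {β : ℝ} (hβ0 : 0 ≤ β) (hβ1 : β ≤ 1) (m : ℕ) :
    dcoef β (m + 1) ≤ dcoef β m := by
  have hc := (Real.concaveOn_rpow hβ0 hβ1).2
    (Set.mem_Ici.mpr (Nat.cast_nonneg m : (0:ℝ) ≤ (m:ℝ)))
    (Set.mem_Ici.mpr (by positivity : (0:ℝ) ≤ (m:ℝ) + 2))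
    (by norm_num : (0:ℝ) ≤ 1/2) (by norm_num : (0:ℝ) ≤ 1/2) (by norm_num)
  simp only [smul_eq_mul] at hc
  have he : (1/2 : ℝ) * (m:ℝ) + (1/2 : ℝ) * ((m:ℝ) + 2) = (m:ℝ) + 1 := by ring
  rw [he] at hc
  simp only [dcoef]
  push_cast
  have h22 : ((m:ℝ) + 1 + 1) = (m:ℝ) + 2 := by ring
  rw [h22]
  linarith

lemma caputo_zero (α : ℝ) (n : ℕ) : caputoCoeff α n 0 = dcoef (1 - α) n := by
  simp [caputoCoeff, dcoef]

lemma caputo_succ (α : ℝ) (m k : ℕ) :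
    caputoCoeff α (m + (k + 1)) (k + 1) = dcoef (1 - α) m - dcoef (1 - α) (m + 1) := by
  rw [caputoCoeff, if_neg (Nat.succ_ne_zero k)]
  have b1 : ((m + (k + 1) : ℕ) : ℝ) + 1 - ((k + 1 : ℕ) : ℝ) = (m : ℝ) + 1 := by
    push_cast; ring
  have b2 : ((m + (k + 1) : ℕ) : ℝ) + 2 - ((k + 1 : ℕ) : ℝ) = (m : ℝ) + 2 := by
    push_cast; ring
  have b3 : ((m + (k + 1) : ℕ) : ℝ) - ((k + 1 : ℕ) : ℝ) = (m : ℝ) := by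
    push_cast; ring
  rw [b1, b2, b3]
  simp only [dcoef]
  push_cast
  have h22 : ((m:ℝ) + 1 + 1) = (m:ℝ) + 2 := by ring
  rw [h22]
  ring

lemma caputo_succ' (α : ℝ) {n k : ℕ} (hk : k < n) :
    caputoCoeff α n (k + 1) = dcoef (1 - α) (n - 1 - k) - dcoef (1 - α) (n - k) := by
  obtain ⟨m, rfl⟩ : ∃ m, n = m + (k + 1) := ⟨n - (k + 1), by omega⟩
  have h1 : m + (k + 1) - 1 - k = m := by omega
  have h2 : m + (k + 1) - k = m + 1 := by omega
  rw [h1, h2, caputo_succ]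

lemma caputo_nonneg {α : ℝ} (hα : α ∈ Set.Ioo (0:ℝ) 1) {n k : ℕ} (hk : k ≤ n) :
    0 ≤ caputoCoeff α n k := by
  have hβ0 : (0:ℝ) ≤ 1 - α := by linarith [hα.2]
  have hβ1 : (1:ℝ) - α ≤ 1 := by linarith [hα.1]
  cases k with
  | zero => rw [caputo_zero]; exact dcoef_nonneg hβ0 n
  | succ k =>
    have hk' : k < n := by omega
    rw [caputo_succ' α hk']
    have he : n - k = (n - 1 - k) + 1 := by omega
    rw [he]
    exact sub_nonneg.mpr (dcoef_succ_le hβ0 hβ1 _)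

lemma caputo_sum {α : ℝ} (hα1 : α < 1) (n : ℕ) :
    ∑ k ∈ Finset.range (n + 1), caputoCoeff α n k = 1 := by
  rw [Finset.sum_range_succ', caputo_zero]
  have h1 : ∑ k ∈ Finset.range n, caputoCoeff α n (k + 1)
      = ∑ k ∈ Finset.range n,
          (fun i => dcoef (1 - α) i - dcoef (1 - α) (i + 1)) (n - 1 - k) := by
    refine Finset.sum_congr rfl fun k hk => ?_
    have hk' : k < n := Finset.mem_range.mp hk
    have he : n - k = n - 1 - k + 1 := by omega
    rw [caputo_succ' α hk', he]
  have h2 := Finset.sum_range_reflect (fun i => dcoef (1 - α) i - dcoef (1 - α) (i + 1)) n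
  rw [h1, h2, Finset.sum_range_sub']
  have h0 : dcoef (1 - α) 0 = 1 := by
    simp [dcoef, Real.zero_rpow (by linarith : (1:ℝ) - α ≠ 0)]
  rw [h0]
  ring

lemma summable_mul_of_sq {f g : ℤ → ℝ} (hf : Summable fun j => (f j) ^ 2)
    (hg : Summable fun j => (g j) ^ 2) : Summable fun j => f j * g j := by
  have hb : ∀ j, |f j * g j| ≤ ((f j) ^ 2 + (g j) ^ 2) / 2 := by
    intro j
    rw [abs_mul]
    nlinarith [sq_nonneg (|f j| - |g j|), sq_abs (f j), sq_abs (g j),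
      abs_nonneg (f j), abs_nonneg (g j)]
  exact (Summable.of_nonneg_of_le (fun j => abs_nonneg _) hb
    ((hf.add hg).div_const 2)).of_abs

lemma summable_diff_sq {f g : ℤ → ℝ} (hf : Summable fun j => (f j) ^ 2)
    (hg : Summable fun j => (g j) ^ 2) : Summable fun j => (f j - g j) ^ 2 := by
  have h : (fun j => (f j - g j) ^ 2)
      = fun j => ((f j) ^ 2 + (g j) ^ 2) - 2 * (f j * g j) := by
    funext j; ring
  rw [h]
  exact (hf.add hg).sub ((summable_mul_of_sq hf hg).mul_left 2)

lemma key_identity (α lam : ℝ) (hα : α ∈ Set.Ioo (0:ℝ) 1)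
    (U : ℕ → ℤ → ℝ) (hU : SolvesImplicitAdvection α lam U)
    (hsum : ∀ n : ℕ, Summable (fun j : ℤ => (U n j) ^ 2)) (n : ℕ) :
    (∑' j : ℤ, (U (n + 1) j) ^ 2)
      + (∑ k ∈ Finset.range (n + 1), caputoCoeff α n k
          * ∑' j : ℤ, (U (n + 1) j - U k j) ^ 2)
      + lam * ∑' j : ℤ, (U (n + 1) j - U (n + 1) (j - 1)) ^ 2
    = ∑ k ∈ Finset.range (n + 1), caputoCoeff α n k * ∑' j : ℤ, (U k j) ^ 2 := by
  have hshift : Summable (fun j : ℤ => (U (n + 1) (j - 1)) ^ 2) := by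
    have := (Equiv.subRight (1:ℤ)).summable_iff.mpr (hsum (n + 1))
    exact this
  have hshift_tsum : (∑' j : ℤ, (U (n + 1) (j - 1)) ^ 2)
      = ∑' j : ℤ, (U (n + 1) j) ^ 2 := by
    have := (Equiv.subRight (1:ℤ)).tsum_eq (fun j : ℤ => (U (n + 1) j) ^ 2)
    simpa using this
  -- pointwise identity
  have key : ∀ j : ℤ, (2 * (1 + lam)) * (U (n + 1) j) ^ 2
      = (∑ k ∈ Finset.range (n + 1), caputoCoeff α n k
            * ((U (n + 1) j) ^ 2 + (U k j) ^ 2 - (U (n + 1) j - U k j) ^ 2))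
        + lam * ((U (n + 1) j) ^ 2 + (U (n + 1) (j - 1)) ^ 2
            - (U (n + 1) j - U (n + 1) (j - 1)) ^ 2) := by
    intro j
    have hj := hU n j
    have h2 : (1 + lam) * U (n + 1) j
        = (∑ k ∈ Finset.range (n + 1), caputoCoeff α n k * U k j)
          + lam * U (n + 1) (j - 1) := by linarith
    have h1 : (2 * (1 + lam)) * (U (n + 1) j) ^ 2
        = (∑ k ∈ Finset.range (n + 1), caputoCoeff α n k * (2 * U (n + 1) j * U k j))
          + lam * (2 * U (n + 1) j * U (n + 1) (j - 1)) := by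
      calc (2 * (1 + lam)) * (U (n + 1) j) ^ 2
          = 2 * U (n + 1) j * ((1 + lam) * U (n + 1) j) := by ring
        _ = 2 * U (n + 1) j * ((∑ k ∈ Finset.range (n + 1), caputoCoeff α n k * U k j)
              + lam * U (n + 1) (j - 1)) := by rw [h2]
        _ = (∑ k ∈ Finset.range (n + 1),
              2 * U (n + 1) j * (caputoCoeff α n k * U k j))
            + lam * (2 * U (n + 1) j * U (n + 1) (j - 1)) := by
            rw [mul_add, Finset.mul_sum]; congr 1; ring
        _ = _ := by
            congr 1
            exact Finset.sum_congr rfl fun k _ => by ring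
    rw [h1]
    congr 1
    · exact Finset.sum_congr rfl fun k _ => by ring
    · ring
  have hA : ∀ k ∈ Finset.range (n + 1), Summable (fun j : ℤ => caputoCoeff α n k
      * ((U (n + 1) j) ^ 2 + (U k j) ^ 2 - (U (n + 1) j - U k j) ^ 2)) := by
    intro k _
    exact (((hsum (n + 1)).add (hsum k)).sub
      (summable_diff_sq (hsum (n + 1)) (hsum k))).mul_left _
  have hB : Summable (fun j : ℤ => lam * ((U (n + 1) j) ^ 2 + (U (n + 1) (j - 1)) ^ 2
      - (U (n + 1) j - U (n + 1) (j - 1)) ^ 2)) :=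
    (((hsum (n + 1)).add hshift).sub (summable_diff_sq (hsum (n + 1)) hshift)).mul_left _
  have htsum : (2 * (1 + lam)) * ∑' j : ℤ, (U (n + 1) j) ^ 2
      = (∑ k ∈ Finset.range (n + 1), caputoCoeff α n k
            * ((∑' j : ℤ, (U (n + 1) j) ^ 2) + (∑' j : ℤ, (U k j) ^ 2)
              - ∑' j : ℤ, (U (n + 1) j - U k j) ^ 2))
        + lam * ((∑' j : ℤ, (U (n + 1) j) ^ 2) + (∑' j : ℤ, (U (n + 1) j) ^ 2)
            - ∑' j : ℤ, (U (n + 1) j - U (n + 1) (j - 1)) ^ 2) := by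
    calc (2 * (1 + lam)) * ∑' j : ℤ, (U (n + 1) j) ^ 2
        = ∑' j : ℤ, (2 * (1 + lam)) * (U (n + 1) j) ^ 2 := tsum_mul_left.symm
      _ = ∑' j : ℤ, ((∑ k ∈ Finset.range (n + 1), caputoCoeff α n k
            * ((U (n + 1) j) ^ 2 + (U k j) ^ 2 - (U (n + 1) j - U k j) ^ 2))
          + lam * ((U (n + 1) j) ^ 2 + (U (n + 1) (j - 1)) ^ 2
            - (U (n + 1) j - U (n + 1) (j - 1)) ^ 2)) := tsum_congr key
      _ = (∑' j : ℤ, ∑ k ∈ Finset.range (n + 1), caputoCoeff α n k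
            * ((U (n + 1) j) ^ 2 + (U k j) ^ 2 - (U (n + 1) j - U k j) ^ 2))
          + ∑' j : ℤ, lam * ((U (n + 1) j) ^ 2 + (U (n + 1) (j - 1)) ^ 2
            - (U (n + 1) j - U (n + 1) (j - 1)) ^ 2) :=
          Summable.tsum_add (summable_sum hA) hB
      _ = _ := by
          rw [Summable.tsum_finsetSum hA]
          congr 1
          · refine Finset.sum_congr rfl fun k hk => ?_
            rw [tsum_mul_left,
              Summable.tsum_sub ((hsum (n + 1)).add (hsum k))
                (summable_diff_sq (hsum (n + 1)) (hsum k)),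
              Summable.tsum_add (hsum (n + 1)) (hsum k)]
          · rw [tsum_mul_left,
              Summable.tsum_sub ((hsum (n + 1)).add hshift)
                (summable_diff_sq (hsum (n + 1)) hshift),
              Summable.tsum_add (hsum (n + 1)) hshift, hshift_tsum]
  have hsplit : ∑ k ∈ Finset.range (n + 1), caputoCoeff α n k
        * ((∑' j : ℤ, (U (n + 1) j) ^ 2) + (∑' j : ℤ, (U k j) ^ 2)
          - ∑' j : ℤ, (U (n + 1) j - U k j) ^ 2)
      = (∑' j : ℤ, (U (n + 1) j) ^ 2)
        + (∑ k ∈ Finset.range (n + 1), caputoCoeff α n k * ∑' j : ℤ, (U k j) ^ 2)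
        - ∑ k ∈ Finset.range (n + 1), caputoCoeff α n k
            * ∑' j : ℤ, (U (n + 1) j - U k j) ^ 2 := by
    have h1 : ∑ k ∈ Finset.range (n + 1), caputoCoeff α n k
        * ((∑' j : ℤ, (U (n + 1) j) ^ 2) + (∑' j : ℤ, (U k j) ^ 2)
          - ∑' j : ℤ, (U (n + 1) j - U k j) ^ 2)
        = ∑ k ∈ Finset.range (n + 1),
          ((caputoCoeff α n k * ∑' j : ℤ, (U (n + 1) j) ^ 2
            + caputoCoeff α n k * ∑' j : ℤ, (U k j) ^ 2)
            - caputoCoeff α n k * ∑' j : ℤ, (U (n + 1) j - U k j) ^ 2) :=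
      Finset.sum_congr rfl fun k _ => by ring
    rw [h1, Finset.sum_sub_distrib, Finset.sum_add_distrib, ← Finset.sum_mul,
      caputo_sum hα.2, one_mul]
  rw [hsplit] at htsum
  linarith

/-- energy estimate for the implicit upwind scheme for linear advection:
for `n ≥ 1`,
`Σ_j (U^n_j)² + Σ_{k=0}^{n-1} c^n_k Σ_j (U^n_j - U^k_j)² + λ Σ_j (U^n_j - U^n_{j-1})²
  ≤ Σ_j (U^0_j)²`, and in particular `‖U^n‖_{ℓ²} ≤ ‖U^0‖_{ℓ²}` for all `n`. -/
theorem implicit_advection_energy_estimate (α τ h a : ℝ)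
    (hα : α ∈ Set.Ioo (0 : ℝ) 1) (hτ : 0 < τ) (hh : 0 < h) (ha : 0 < a)
    (lam : ℝ) (hlam : lam = a * τ ^ α / (h * Real.Gamma (2 - α)))
    (U : ℕ → ℤ → ℝ) (hU : SolvesImplicitAdvection α lam U)
    (hsum : ∀ n : ℕ, Summable (fun j : ℤ => (U n j) ^ 2)) :
    (∀ n : ℕ, 1 ≤ n →
      (∑' j : ℤ, (U n j) ^ 2)
        + (∑ k ∈ Finset.range n, caputoCoeff α (n - 1) k
            * ∑' j : ℤ, (U n j - U k j) ^ 2)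
        + lam * ∑' j : ℤ, (U n j - U n (j - 1)) ^ 2
      ≤ ∑' j : ℤ, (U 0 j) ^ 2) ∧
    (∀ n : ℕ, ∑' j : ℤ, (U n j) ^ 2 ≤ ∑' j : ℤ, (U 0 j) ^ 2) := by
  have hlam0 : 0 ≤ lam := by
    rw [hlam]
    have hΓ : 0 < Real.Gamma (2 - α) := Real.Gamma_pos_of_pos (by linarith [hα.2])
    have hτα : 0 < τ ^ α := Real.rpow_pos_of_pos hτ α
    positivity
  have hstep : ∀ m : ℕ, (∀ k, k ≤ m → (∑' j : ℤ, (U k j) ^ 2) ≤ ∑' j : ℤ, (U 0 j) ^ 2) →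
      ∑ k ∈ Finset.range (m + 1), caputoCoeff α m k * ∑' j : ℤ, (U k j) ^ 2
        ≤ ∑' j : ℤ, (U 0 j) ^ 2 := by
    intro m hm
    calc ∑ k ∈ Finset.range (m + 1), caputoCoeff α m k * ∑' j : ℤ, (U k j) ^ 2
        ≤ ∑ k ∈ Finset.range (m + 1), caputoCoeff α m k * ∑' j : ℤ, (U 0 j) ^ 2 :=
          Finset.sum_le_sum fun k hk =>
            mul_le_mul_of_nonneg_left (hm k (Nat.lt_succ_iff.mp (Finset.mem_range.mp hk)))
              (caputo_nonneg hα (Nat.lt_succ_iff.mp (Finset.mem_range.mp hk)))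
      _ = (∑ k ∈ Finset.range (m + 1), caputoCoeff α m k) * ∑' j : ℤ, (U 0 j) ^ 2 :=
          (Finset.sum_mul _ _ _).symm
      _ = ∑' j : ℤ, (U 0 j) ^ 2 := by rw [caputo_sum hα.2, one_mul]
  have h2 : ∀ n : ℕ, (∑' j : ℤ, (U n j) ^ 2) ≤ ∑' j : ℤ, (U 0 j) ^ 2 := by
    intro n
    induction n using Nat.strong_induction_on with
    | _ n ih =>
      cases n with
      | zero => exact le_rfl
      | succ m =>
        have hid := key_identity α lam hα U hU hsum m
        have hd : 0 ≤ ∑ k ∈ Finset.range (m + 1), caputoCoeff α m k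
            * ∑' j : ℤ, (U (m + 1) j - U k j) ^ 2 :=
          Finset.sum_nonneg fun k hk => mul_nonneg
            (caputo_nonneg hα (Nat.lt_succ_iff.mp (Finset.mem_range.mp hk)))
            (tsum_nonneg fun j => sq_nonneg _)
        have hg : 0 ≤ lam * ∑' j : ℤ, (U (m + 1) j - U (m + 1) (j - 1)) ^ 2 :=
          mul_nonneg hlam0 (tsum_nonneg fun j => sq_nonneg _)
        have hle := hstep m fun k hk => ih k (by omega)
        linarith
  refine ⟨?_, h2⟩
  intro n hn
  obtain ⟨m, rfl⟩ : ∃ m, n = m + 1 := ⟨n - 1, by omega⟩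
  rw [Nat.add_sub_cancel, key_identity α lam hα U hU hsum m]
  exact hstep m fun k _ => h2 k
end
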